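/- Let s be a system of cycles (disjoint oriented simple lattice cycles in Z^2) corresponding to a tiling of a duplex region, let γ be a cycle of s, and let v ∈ Z^2. Then the topological weight top(γ,v) minus the metric weight m(γ,v) equals the angle ∠(γ,v) if v lies on γ, and equals 0 otherwise. -/
import Mathlib

open scoped Classical

noncomputable section

/-- A unit step in `ℤ²`. -/
def IsUnitStep (d : ℤ × ℤ) : Prop :=
  d = (1, 0) ∨ d = (-1, 0) ∨ d = (0, 1) ∨ d = (0, -1)

/-- Signed crossing of the lattice edge from `A` to `B` with the horizontal ray going
right from `p` (half-open convention in the vertical direction). -/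
def windTerm (A B : ℤ × ℤ) (p : ℝ × ℝ) : ℤ :=
  if A.1 = B.1 ∧ p.1 < (A.1 : ℝ) ∧ ((min A.2 B.2 : ℤ) : ℝ) ≤ p.2 ∧
      p.2 < ((max A.2 B.2 : ℤ) : ℝ) then
    B.2 - A.2
  else 0

/-- The winding number of the closed lattice cycle with vertices `g 0, …, g (n-1)`
(edges from `g k` to `g (k+1)`, with `g n = g 0`) around a point `p` not on the
cycle, computed as the signed number of crossings with a horizontal ray. -/
def wind (n : ℕ) (g : ℕ → ℤ × ℤ) (p : ℝ × ℝ) : ℤ :=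
  ∑ k ∈ Finset.range n, windTerm (g k) (g (k + 1)) p

/-- The four points `v + (±1/2, ±1/2)` surrounding `v ∈ ℤ²`. -/
def dpt (v : ℤ × ℤ) (e : Bool × Bool) : ℝ × ℝ :=
  ((v.1 : ℝ) + (if e.1 then 1 / 2 else -(1 / 2)),
   (v.2 : ℝ) + (if e.2 then 1 / 2 else -(1 / 2)))

/-- The metric weight `m(γ,v) = (1/4) Σ_{u ∈ N_v} wind(γ,u)`. -/
def mweight (n : ℕ) (g : ℕ → ℤ × ℤ) (v : ℤ × ℤ) : ℝ :=
  (1 / 4) * ∑ e : Bool × Bool, (wind n g (dpt v e) : ℝ)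

/-- The topological weight `top(γ,v)`: the average of the minimum and maximum of
`{wind(γ,u) : u ∈ N_v}`. -/
def tweight (n : ℕ) (g : ℕ → ℤ × ℤ) (v : ℤ × ℤ) : ℝ :=
  (((Finset.univ.inf' Finset.univ_nonempty fun e : Bool × Bool => wind n g (dpt v e)) +
      (Finset.univ.sup' Finset.univ_nonempty fun e : Bool × Bool => wind n g (dpt v e)) :
      ℤ) : ℝ) / 2

/-- The previous index of `k` among `0, …, n-1`, cyclically. -/
def prevIdx (n k : ℕ) : ℕ := if k = 0 then n - 1 else k - 1

/-- Four times the angle `∠(γ, g k)` of the cycle at its `k`-th vertex: the cross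
product of the incoming and outgoing edge vectors (`1` for a left turn, `-1` for a
right turn, `0` if the cycle goes straight). -/
def turnNum (n : ℕ) (g : ℕ → ℤ × ℤ) (k : ℕ) : ℤ :=
  let d1 := g k - g (prevIdx n k)
  let d2 := g (k + 1) - g k
  d1.1 * d2.2 - d1.2 * d2.1

/-- The angle `∠(γ,v)` of the cycle at `v` (`0` if `v` is not a vertex of the cycle). -/
def angleAt (n : ℕ) (g : ℕ → ℤ × ℤ) (v : ℤ × ℤ) : ℝ :=
  (1 / 4) * ∑ k ∈ Finset.range n, if g k = v then (turnNum n g k : ℝ) else 0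

/-- The color `col(v) = (−1)^{x+y+1}` of `v = (x,y) ∈ ℤ²`. -/
def col (v : ℤ × ℤ) : ℝ := (-1 : ℝ) ^ (v.1 + v.2 + 1)

/-! ### Auxiliary machinery -/

lemma unitStep_cases {A B : ℤ × ℤ} (h : IsUnitStep (B - A)) :
    (B.1 = A.1 + 1 ∧ B.2 = A.2) ∨ (B.1 = A.1 - 1 ∧ B.2 = A.2) ∨
    (B.1 = A.1 ∧ B.2 = A.2 + 1) ∨ (B.1 = A.1 ∧ B.2 = A.2 - 1) := by
  rcases h with h|h|h|h <;> rw [Prod.ext_iff] at h <;>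
    simp only [Prod.fst_sub, Prod.snd_sub] at h <;> omega

lemma half_lt_int (m k : ℤ) : ((m:ℝ) + 1/2 < (k:ℝ)) ↔ m < k := by
  constructor
  · intro h
    have : (m:ℝ) < (k:ℝ) := by linarith
    exact_mod_cast this
  · intro h
    have : (m:ℝ) + 1 ≤ (k:ℝ) := by exact_mod_cast h
    linarith

lemma int_le_half (m k : ℤ) : ((m:ℝ) ≤ (k:ℝ) + 1/2) ↔ m ≤ k := by
  constructor
  · intro h
    have : (m:ℝ) < (k:ℝ) + 1 := by linarith
    have : m < k + 1 := by exact_mod_cast this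
    omega
  · intro h
    have : (m:ℝ) ≤ (k:ℝ) := by exact_mod_cast h
    linarith

lemma inf4 (f : Bool × Bool → ℤ) :
    Finset.univ.inf' Finset.univ_nonempty f
      = min (min (f (false,false)) (f (false,true))) (min (f (true,false)) (f (true,true))) := by
  apply le_antisymm
  · exact le_min (le_min (Finset.inf'_le _ (Finset.mem_univ _)) (Finset.inf'_le _ (Finset.mem_univ _)))
      (le_min (Finset.inf'_le _ (Finset.mem_univ _)) (Finset.inf'_le _ (Finset.mem_univ _)))
  · apply Finset.le_inf'
    rintro ⟨b1, b2⟩ -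
    cases b1 <;> cases b2 <;> omega

lemma sup4 (f : Bool × Bool → ℤ) :
    Finset.univ.sup' Finset.univ_nonempty f
      = max (max (f (false,false)) (f (false,true))) (max (f (true,false)) (f (true,true))) := by
  apply le_antisymm
  · apply Finset.sup'_le
    rintro ⟨b1, b2⟩ -
    cases b1 <;> cases b2 <;> omega
  · exact max_le (max_le (Finset.le_sup' _ (Finset.mem_univ _)) (Finset.le_sup' _ (Finset.mem_univ _)))
      (max_le (Finset.le_sup' _ (Finset.mem_univ _)) (Finset.le_sup' _ (Finset.mem_univ _)))

lemma sum4 (f : Bool × Bool → ℝ) :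
    ∑ e : Bool × Bool, f e
      = f (false,false) + f (false,true) + f (true,false) + f (true,true) := by
  rw [Fintype.sum_prod_type]
  simp [Fintype.sum_bool]
  ring

/-- The point `(xl + 1/2, yl + 1/2)`. -/
def pt (xl yl : ℤ) : ℝ × ℝ := ((xl:ℝ) + 1/2, (yl:ℝ) + 1/2)

/-- Integer version of `windTerm` evaluated at `pt xl yl`. -/
def wt' (A B : ℤ × ℤ) (xl yl : ℤ) : ℤ :=
  if A.1 = B.1 ∧ xl < A.1 ∧ min A.2 B.2 = yl then B.2 - A.2 else 0

lemma windTerm_pt (A B : ℤ × ℤ) (h : IsUnitStep (B - A)) (xl yl : ℤ) :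
    windTerm A B (pt xl yl) = wt' A B xl yl := by
  have p1 : (pt xl yl).1 = (xl:ℝ) + 1/2 := rfl
  have p2 : (pt xl yl).2 = (yl:ℝ) + 1/2 := rfl
  have hiff : (A.1 = B.1 ∧ (pt xl yl).1 < (A.1:ℝ) ∧ ((min A.2 B.2 : ℤ):ℝ) ≤ (pt xl yl).2 ∧
      (pt xl yl).2 < ((max A.2 B.2 : ℤ):ℝ)) ↔ (A.1 = B.1 ∧ xl < A.1 ∧ min A.2 B.2 = yl) := by
    rw [p1, p2, half_lt_int, int_le_half, half_lt_int]
    rcases unitStep_cases h with ⟨h1,h2⟩|⟨h1,h2⟩|⟨h1,h2⟩|⟨h1,h2⟩ <;> omega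
  unfold windTerm wt'
  exact if_congr hiff rfl rfl

/-- Integer version of `wind` at the point `pt xl yl`. -/
def windI (n : ℕ) (g : ℕ → ℤ × ℤ) (xl yl : ℤ) : ℤ :=
  ∑ k ∈ Finset.range n, wt' (g k) (g (k+1)) xl yl

lemma wind_eq_windI (n : ℕ) (g : ℕ → ℤ × ℤ) (hstep : ∀ k < n, IsUnitStep (g (k + 1) - g k))
    (xl yl : ℤ) : wind n g (pt xl yl) = windI n g xl yl :=
  Finset.sum_congr rfl fun k hk => windTerm_pt _ _ (hstep k (Finset.mem_range.mp hk)) _ _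

/-- The number of occurrences of the directed edge `A → B` in the cycle. -/
def cnt (n : ℕ) (g : ℕ → ℤ × ℤ) (A B : ℤ × ℤ) : ℤ :=
  ∑ k ∈ Finset.range n, if g k = A ∧ g (k+1) = B then 1 else 0

lemma hdiff_term (A B : ℤ × ℤ) (h : IsUnitStep (B - A)) (xl yl : ℤ) :
    wt' A B xl yl - wt' A B (xl+1) yl
      = (if A = (xl+1, yl) ∧ B = (xl+1, yl+1) then 1 else 0)
        - (if A = (xl+1, yl+1) ∧ B = (xl+1, yl) then 1 else 0) := by
  obtain ⟨a1, a2⟩ := A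
  obtain ⟨b1, b2⟩ := B
  rcases unitStep_cases h with ⟨h1,h2⟩|⟨h1,h2⟩|⟨h1,h2⟩|⟨h1,h2⟩ <;>
    simp only [wt', Prod.mk.injEq] at * <;> split_ifs <;> omega

lemma vdiff_term (A B : ℤ × ℤ) (h : IsUnitStep (B - A)) (xl yl : ℤ) :
    wt' A B xl (yl+1) - wt' A B xl yl
      + ((if B.2 = yl+1 ∧ xl < B.1 then (1:ℤ) else 0) - (if A.2 = yl+1 ∧ xl < A.1 then 1 else 0))
      = (if A = (xl, yl+1) ∧ B = (xl+1, yl+1) then 1 else 0)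
        - (if A = (xl+1, yl+1) ∧ B = (xl, yl+1) then 1 else 0) := by
  obtain ⟨a1, a2⟩ := A
  obtain ⟨b1, b2⟩ := B
  rcases unitStep_cases h with ⟨h1,h2⟩|⟨h1,h2⟩|⟨h1,h2⟩|⟨h1,h2⟩ <;>
    simp only [wt', Prod.mk.injEq] at * <;> split_ifs <;> omega

lemma windI_hdiff (n : ℕ) (g : ℕ → ℤ × ℤ) (hstep : ∀ k < n, IsUnitStep (g (k + 1) - g k))
    (xl yl : ℤ) :
    windI n g xl yl - windI n g (xl+1) yl
      = cnt n g (xl+1, yl) (xl+1, yl+1) - cnt n g (xl+1, yl+1) (xl+1, yl) := by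
  unfold windI cnt
  rw [← Finset.sum_sub_distrib, ← Finset.sum_sub_distrib]
  exact Finset.sum_congr rfl fun k hk => hdiff_term _ _ (hstep k (Finset.mem_range.mp hk)) _ _

lemma windI_vdiff (n : ℕ) (g : ℕ → ℤ × ℤ) (hclosed : g n = g 0)
    (hstep : ∀ k < n, IsUnitStep (g (k + 1) - g k)) (xl yl : ℤ) :
    windI n g xl (yl+1) - windI n g xl yl
      = cnt n g (xl, yl+1) (xl+1, yl+1) - cnt n g (xl+1, yl+1) (xl, yl+1) := by
  have tele : ∑ k ∈ Finset.range n,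
      ((if (g (k+1)).2 = yl+1 ∧ xl < (g (k+1)).1 then (1:ℤ) else 0)
        - (if (g k).2 = yl+1 ∧ xl < (g k).1 then 1 else 0)) = 0 := by
    rw [Finset.sum_range_sub (fun k => if (g k).2 = yl+1 ∧ xl < (g k).1 then (1:ℤ) else 0), hclosed]
    ring
  have main : windI n g xl (yl+1) - windI n g xl yl
      + ∑ k ∈ Finset.range n,
        ((if (g (k+1)).2 = yl+1 ∧ xl < (g (k+1)).1 then (1:ℤ) else 0)
          - (if (g k).2 = yl+1 ∧ xl < (g k).1 then 1 else 0))
      = cnt n g (xl, yl+1) (xl+1, yl+1) - cnt n g (xl+1, yl+1) (xl, yl+1) := by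
    unfold windI cnt
    rw [← Finset.sum_sub_distrib, ← Finset.sum_add_distrib, ← Finset.sum_sub_distrib]
    exact Finset.sum_congr rfl fun k hk => vdiff_term _ _ (hstep k (Finset.mem_range.mp hk)) _ _
  rw [tele, add_zero] at main
  exact main

section CntLemmas
variable {n : ℕ} {g : ℕ → ℤ × ℤ} {v : ℤ × ℤ}

lemma cnt_from_zero (h : ∀ k < n, g k ≠ v) (B : ℤ × ℤ) : cnt n g v B = 0 :=
  Finset.sum_eq_zero fun k hk => if_neg fun hc => h k (Finset.mem_range.mp hk) hc.1

lemma cnt_to_zero (hn : 0 < n) (hclosed : g n = g 0) (h : ∀ k < n, g k ≠ v) (A : ℤ × ℤ) :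
    cnt n g A v = 0 := by
  refine Finset.sum_eq_zero fun k hk => if_neg fun hc => ?_
  have hkn := Finset.mem_range.mp hk
  by_cases hk1 : k + 1 = n
  · exact h 0 hn (by rw [← hclosed, ← hk1]; exact hc.2)
  · exact h (k+1) (by omega) hc.2

lemma angle_zero (h : ∀ k < n, g k ≠ v) : angleAt n g v = 0 := by
  unfold angleAt
  rw [Finset.sum_eq_zero fun k hk => if_neg (h k (Finset.mem_range.mp hk)), mul_zero]

variable {k0 : ℕ} (hsimple : Set.InjOn g ↑(Finset.range n)) (hk0 : k0 < n) (hv : g k0 = v)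
include hsimple hk0 hv

lemma cnt_from_eq (B : ℤ × ℤ) : cnt n g v B = if g (k0+1) = B then 1 else 0 := by
  unfold cnt
  rw [Finset.sum_eq_single k0]
  · simp [hv]
  · intro j hj hne
    refine if_neg fun hc => hne (hsimple ?_ ?_ (hc.1.trans hv.symm)) <;>
      simp [Finset.mem_range] at * <;> omega
  · intro hcon
    exact absurd (Finset.mem_range.mpr hk0) hcon

lemma angle_eq : angleAt n g v = (1/4) * (turnNum n g k0 : ℝ) := by
  unfold angleAt
  congr 1
  rw [Finset.sum_eq_single k0]
  · rw [if_pos hv]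
  · intro j hj hne
    refine if_neg fun hc => hne (hsimple ?_ ?_ (hc.trans hv.symm)) <;>
      simp [Finset.mem_range] at * <;> omega
  · intro hcon
    exact absurd (Finset.mem_range.mpr hk0) hcon

omit hsimple hv in
lemma prev_succ (hn : 0 < n) (hclosed : g n = g 0) :
    prevIdx n k0 < n ∧ g (prevIdx n k0 + 1) = g k0 := by
  unfold prevIdx
  split
  · rename_i h0
    subst h0
    refine ⟨by omega, ?_⟩
    rw [show n - 1 + 1 = n by omega, hclosed]
  · rename_i h0
    refine ⟨by omega, ?_⟩
    congr 1
    omega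

lemma cnt_to_eq (hn : 0 < n) (hclosed : g n = g 0) (A : ℤ × ℤ) :
    cnt n g A v = if g (prevIdx n k0) = A then 1 else 0 := by
  obtain ⟨hp, hps⟩ := prev_succ (g := g) hk0 hn hclosed
  unfold cnt
  rw [Finset.sum_eq_single (prevIdx n k0)]
  · rw [hps, hv]
    by_cases hA : g (prevIdx n k0) = A
    · rw [if_pos ⟨hA, rfl⟩, if_pos hA]
    · rw [if_neg (fun hc => hA hc.1), if_neg hA]
  · intro j hj hne
    refine if_neg fun hc => hne ?_
    have hjn := Finset.mem_range.mp hj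
    by_cases hj1 : j + 1 = n
    · have h0 : g 0 = v := by rw [← hclosed, ← hj1]; exact hc.2
      have : (0:ℕ) = k0 := hsimple (by simp [Finset.mem_range]; omega)
        (by simp [Finset.mem_range]; omega) (h0.trans hv.symm)
      simp only [prevIdx]
      split <;> omega
    · have : j + 1 = k0 := hsimple (by simp [Finset.mem_range]; omega)
        (by simp [Finset.mem_range]; omega) (hc.2.trans hv.symm)
      simp only [prevIdx]
      split <;> omega
  · intro hcon
    exact absurd (Finset.mem_range.mpr hp) hcon

end CntLemmas


lemma unitStep_cases' {A B : ℤ × ℤ} (h : IsUnitStep (B - A)) :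
    (A.1 = B.1 - 1 ∧ A.2 = B.2) ∨ (A.1 = B.1 + 1 ∧ A.2 = B.2) ∨
    (A.1 = B.1 ∧ A.2 = B.2 - 1) ∨ (A.1 = B.1 ∧ A.2 = B.2 + 1) := by
  rcases h with h|h|h|h <;> rw [Prod.ext_iff] at h <;>
    simp only [Prod.fst_sub, Prod.snd_sub] at h <;> omega

set_option maxHeartbeats 2000000 in
lemma key_abstract (a c b d x y : ℤ) (P K Q : ℤ × ℤ)
    (hK : K = (x, y))
    (hdin : IsUnitStep (K - P)) (hdout : IsUnitStep (Q - K))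
    (eR : d - b = (if Q = (x+1, y) then (1:ℤ) else 0) - (if P = (x+1, y) then 1 else 0))
    (eU : c - d = (if Q = (x, y+1) then (1:ℤ) else 0) - (if P = (x, y+1) then 1 else 0))
    (eD : a - b = (if P = (x, y-1) then (1:ℤ) else 0) - (if Q = (x, y-1) then 1 else 0)) :
    2 * (min (min a c) (min b d) + max (max a c) (max b d)) - (a + c + b + d)
      = (K.1 - P.1) * (Q.2 - K.2) - (K.2 - P.2) * (Q.1 - K.1) := by
  obtain ⟨p1, p2⟩ := P
  obtain ⟨k1, k2⟩ := K
  obtain ⟨q1, q2⟩ := Q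
  rw [Prod.mk.injEq] at hK
  obtain ⟨rfl, rfl⟩ := hK
  simp only [Prod.mk.injEq] at eR eU eD
  rcases unitStep_cases' hdin with ⟨h1a,h1b⟩|⟨h1a,h1b⟩|⟨h1a,h1b⟩|⟨h1a,h1b⟩ <;>
    rcases unitStep_cases hdout with ⟨h2a,h2b⟩|⟨h2a,h2b⟩|⟨h2a,h2b⟩|⟨h2a,h2b⟩ <;>
    · simp only at h1a h1b h2a h2b
      subst h1a h1b h2a h2b
      ring_nf
      split_ifs at eR eU eD <;> omega

lemma dpt_ff (x y : ℤ) : dpt (x,y) (false,false) = pt (x-1) (y-1) := by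
  unfold dpt pt
  simp only [Prod.mk.injEq]
  constructor <;> · push_cast; ring
lemma dpt_ft (x y : ℤ) : dpt (x,y) (false,true) = pt (x-1) y := by
  unfold dpt pt
  simp only [Prod.mk.injEq]
  constructor <;> · push_cast; ring
lemma dpt_tf (x y : ℤ) : dpt (x,y) (true,false) = pt x (y-1) := by
  unfold dpt pt
  simp only [Prod.mk.injEq]
  constructor <;> · push_cast; ring
lemma dpt_tt (x y : ℤ) : dpt (x,y) (true,true) = pt x y := by
  unfold dpt pt
  simp only [Prod.mk.injEq]
  constructor <;> · push_cast; ring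

set_option maxHeartbeats 1000000 in
theorem tweight_sub_mweight_eq_angle
    (n : ℕ) (g : ℕ → ℤ × ℤ) (hn : 0 < n)
    (hclosed : g n = g 0)
    (hstep : ∀ k < n, IsUnitStep (g (k + 1) - g k))
    (hsimple : Set.InjOn g ↑(Finset.range n))
    (v : ℤ × ℤ) :
    tweight n g v - mweight n g v = angleAt n g v := by
  obtain ⟨x, y⟩ := v
  have hwI : ∀ xl yl : ℤ, wind n g (pt xl yl) = windI n g xl yl := wind_eq_windI n g hstep
  set a := windI n g (x-1) (y-1) with hadef
  set c := windI n g (x-1) y with hcdef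
  set b := windI n g x (y-1) with hbdef
  set d := windI n g x y with hddef
  have hd1 : wind n g (dpt (x,y) (false,false)) = a := by rw [dpt_ff, hwI]
  have hd2 : wind n g (dpt (x,y) (false,true)) = c := by rw [dpt_ft, hwI]
  have hd3 : wind n g (dpt (x,y) (true,false)) = b := by rw [dpt_tf, hwI]
  have hd4 : wind n g (dpt (x,y) (true,true)) = d := by rw [dpt_tt, hwI]
  have htw : tweight n g (x,y)
      = ((min (min a c) (min b d) + max (max a c) (max b d) : ℤ) : ℝ) / 2 := by
    unfold tweight
    rw [inf4, sup4]
    simp only [hd1, hd2, hd3, hd4]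
  have hmw : mweight n g (x,y) = ((a:ℝ) + c + b + d) / 4 := by
    unfold mweight
    rw [sum4]
    simp only [hd1, hd2, hd3, hd4]
    ring
  have eR : d - b = cnt n g (x, y) (x+1, y) - cnt n g (x+1, y) (x, y) := by
    have h := windI_vdiff n g hclosed hstep x (y-1)
    rw [show y - 1 + 1 = y from by ring] at h
    exact h
  have eU : c - d = cnt n g (x, y) (x, y+1) - cnt n g (x, y+1) (x, y) := by
    have h := windI_hdiff n g hstep (x-1) y
    rw [show x - 1 + 1 = x from by ring] at h
    exact h
  have eD : a - b = cnt n g (x, y-1) (x, y) - cnt n g (x, y) (x, y-1) := by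
    have h := windI_hdiff n g hstep (x-1) (y-1)
    rw [show x - 1 + 1 = x from by ring, show y - 1 + 1 = y from by ring] at h
    exact h
  by_cases hex : ∃ k, k < n ∧ g k = (x,y)
  · obtain ⟨k0, hk0n, hk0v⟩ := hex
    obtain ⟨hp, hps⟩ := prev_succ (g := g) (k0 := k0) hk0n hn hclosed
    have hcf := cnt_from_eq hsimple hk0n hk0v
    have hct := cnt_to_eq hsimple hk0n hk0v hn hclosed
    rw [hcf, hct] at eR
    rw [hcf, hct] at eU
    rw [hct, hcf] at eD
    have hdout : IsUnitStep (g (k0+1) - g k0) := hstep k0 hk0n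
    have hdin : IsUnitStep (g k0 - g (prevIdx n k0)) := by
      have h := hstep (prevIdx n k0) hp
      rw [hps] at h
      exact h
    have key := key_abstract a c b d x y (g (prevIdx n k0)) (g k0) (g (k0+1))
      hk0v hdin hdout eR eU eD
    have hturn : turnNum n g k0
        = ((g k0).1 - (g (prevIdx n k0)).1) * ((g (k0+1)).2 - (g k0).2)
          - ((g k0).2 - (g (prevIdx n k0)).2) * ((g (k0+1)).1 - (g k0).1) := by
      unfold turnNum
      simp only [Prod.fst_sub, Prod.snd_sub]
    have hang : angleAt n g (x,y) = (1/4) * (turnNum n g k0 : ℝ) :=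
      angle_eq hsimple hk0n hk0v
    rw [htw, hmw, hang, hturn]
    have keyR := congrArg (fun z : ℤ => (z:ℝ)) key
    push_cast at keyR ⊢
    linarith
  · push_neg at hex
    have hex' : ∀ k < n, g k ≠ (x,y) := fun k hk => hex k hk
    rw [cnt_from_zero hex', cnt_to_zero hn hclosed hex'] at eR
    rw [cnt_from_zero hex', cnt_to_zero hn hclosed hex'] at eU
    rw [cnt_to_zero hn hclosed hex', cnt_from_zero hex'] at eD
    have hang : angleAt n g (x,y) = 0 := angle_zero hex'
    rw [htw, hmw, hang]
    have h1 : min (min a c) (min b d) = b := by omega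
    have h2 : max (max a c) (max b d) = b := by omega
    rw [h1, h2, show a = b from by omega, show c = b from by omega, show d = b from by omega]
    push_cast
    ring

end
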